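/- Let E be an n×n matrix of nonnegative integers with det E ≠ 0 and set d = |det E|. Then Σ_{J good for E^T, 0 < |J| < n} (−1)^{|J|−1} · d / |G_{E^T}^J| + (−1)^{n−1} · d − 1 = (−1)^n · ( Σ_{I good for E, 0 < |I| < n} (−1)^{|I|−1} · |G_E^I| + (−1)^{n−1} − d ). Here G_E^I = {λ ∈ G_E : λ_j = 1 for all j ∈ I} and G_{E^T}^J = {μ ∈ G_{E^T} : μ_j = 1 for all j ∈ J}. -/

import Mathlib

open Finset

variable {n : ℕ}

/-- The diagonal symmetry group `G_E` of the invertible polynomial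
`f(x) = ∑ i, ∏ j, x_j ^ E i j`, realized as the subgroup of `(ℂ*)^n` of
diagonal transformations `λ` with `∏ j, λ_j ^ E i j = 1` for all `i`. -/
def symGroup (E : Matrix (Fin n) (Fin n) ℕ) : Subgroup (Fin n → ℂˣ) where
  carrier := {l | ∀ i, ∏ j, l j ^ E i j = 1}
  one_mem' := by intro i; simp
  mul_mem' := by
    intro a b ha hb i
    simp only [Pi.mul_apply, mul_pow, Finset.prod_mul_distrib, ha i, hb i, mul_one]
  inv_mem' := by
    intro a ha i
    simp only [Pi.inv_apply, inv_pow, Finset.prod_inv_distrib, ha i, inv_one]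


open Classical in
/-- For a subset `I ⊆ {1,…,n}` of columns, `rowSet E I = A(I)` is the set of rows of `E`
supported in the columns `I`, i.e. `{i : E i j = 0 for all j ∉ I}`. -/
noncomputable def rowSet (E : Matrix (Fin n) (Fin n) ℕ) (I : Finset (Fin n)) : Finset (Fin n) :=
  Finset.univ.filter fun i => ∀ j, j ∉ I → E i j = 0

/-- The subgroup of `(ℂ*)^n` of elements `λ` with `λ_j = 1` for all `j ∈ I`. -/
def fixedSub (I : Finset (Fin n)) : Subgroup (Fin n → ℂˣ) where
  carrier := {l | ∀ j ∈ I, l j = 1}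
  one_mem' := by intro j hj; rfl
  mul_mem' := by intro a b ha hb j hj; simp [Pi.mul_apply, ha j hj, hb j hj]
  inv_mem' := by intro a ha j hj; simp [Pi.inv_apply, ha j hj]

/-- The isotropy subgroup `G_E^I = {λ ∈ G_E : λ_j = 1 for all j ∈ I}` of the points of
the coordinate torus `(ℂ*)^{Iᶜ}` under the diagonal `G_E`-action. -/
def isotropy (E : Matrix (Fin n) (Fin n) ℕ) (I : Finset (Fin n)) :
    Subgroup (Fin n → ℂˣ) :=
  symGroup E ⊓ fixedSub I


section AuxCounting

open Matrix

variable {ι : Type*} [Fintype ι] [DecidableEq ι]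


lemma rows_linearIndependent {M : Matrix ι ι ℤ} (hM : M.det ≠ 0) :
    LinearIndependent ℤ M := by
  refine Fintype.linearIndependent_iff.mpr ?_
  intro c hc
  by_contra hne
  push_neg at hne
  have : ∃ v, v ≠ 0 ∧ Mᵀ.mulVec v = 0 := by
    refine ⟨c, ?_, ?_⟩
    · intro h0; obtain ⟨i, hi⟩ := hne; exact hi (by rw [h0]; rfl)
    · ext j
      have := congrFun hc j
      simpa [Matrix.mulVec, dotProduct, Finset.sum_apply, mul_comm] using this
  rw [Matrix.exists_mulVec_eq_zero_iff] at this
  exact hM (by simpa [Matrix.det_transpose] using this)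

lemma card_quot_rowSpan (M : Matrix ι ι ℤ) (hM : M.det ≠ 0) :
    Nat.card ((ι → ℤ) ⧸ Submodule.span ℤ (Set.range M)) = M.det.natAbs := by
  classical
  set L := Submodule.span ℤ (Set.range M) with hL
  have hli : LinearIndependent ℤ M := rows_linearIndependent hM
  let bR : Module.Basis ι ℤ L := Module.Basis.span hli
  obtain ⟨m, snf⟩ := L.smithNormalForm (Pi.basisFun ℤ ι)
  have hm : m = Fintype.card ι := by
    have e := Module.Basis.indexEquiv snf.bN bR
    simpa using Fintype.card_congr e
  -- index formula
  have hidx : L.toAddSubgroup.index = ∏ i, (snf.a i).natAbs := by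
    have h := snf.toAddSubgroup_index_eq_pow_mul_prod
    have h0 : Fintype.card ι - m = 0 := by omega
    rw [h, h0]
    simp only [pow_zero, one_mul]
    exact Finset.prod_congr rfl fun i _ => by
      rw [Ideal.span_singleton_toAddSubgroup_eq_zmultiples, Int.index_zmultiples]
  -- Nat.card of quotient equals index
  have hcard : Nat.card ((ι → ℤ) ⧸ L) = L.toAddSubgroup.index := rfl
  rw [hcard, hidx]
  -- now the determinant computation
  have hfb : Function.Bijective snf.f := by
    rw [Fintype.bijective_iff_injective_and_card]
    exact ⟨snf.f.injective, by simp [hm]⟩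
  let eF : Fin m ≃ ι := Equiv.ofBijective snf.f hfb
  let bN' : Module.Basis ι ℤ L := snf.bN.reindex eF
  have hbN' : ∀ j, (bN' j : ι → ℤ) = snf.a (eF.symm j) • snf.bM j := by
    intro j
    have h1 := snf.snf (eF.symm j)
    have h2 : snf.f (eF.symm j) = j := eF.apply_symm_apply j
    rw [h2] at h1
    simpa [bN', Module.Basis.reindex_apply] using h1
  let std := Pi.basisFun ℤ ι
  let P := std.toMatrix ⇑snf.bM
  let S := std.toMatrix (fun j => (bN' j : ι → ℤ))
  let C := bN'.toMatrix ⇑bR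
  let R := std.toMatrix (fun i => (bR i : ι → ℤ))
  have hR : R = Mᵀ := by
    ext i j
    simp [R, std, Module.Basis.toMatrix_apply, Pi.basisFun_repr, Module.Basis.span_apply, bR,
      Matrix.transpose_apply]
    exact congrFun (congrArg Subtype.val (Module.Basis.span_apply hli j)) i
  have hS : S = P * Matrix.diagonal (fun j => snf.a (eF.symm j)) := by
    ext i j
    rw [Matrix.mul_diagonal]
    simp [S, P, std, Module.Basis.toMatrix_apply, Pi.basisFun_repr, hbN' j, mul_comm]
  have hSC : S * C = R := by
    ext i j
    rw [Matrix.mul_apply]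
    have expand : (bR j : ι → ℤ) i = ∑ k, bN'.repr (bR j) k * (bN' k : ι → ℤ) i := by
      conv_lhs => rw [← Module.Basis.sum_repr bN' (bR j)]
      simp [Finset.sum_apply, -Module.Basis.sum_repr]
    rw [show R i j = (bR j : ι → ℤ) i from by
        simp [R, std, Module.Basis.toMatrix_apply, Pi.basisFun_repr], expand]
    exact Finset.sum_congr rfl fun k _ => by
      simp [S, C, std, Module.Basis.toMatrix_apply, Pi.basisFun_repr, mul_comm]
  have hPu : IsUnit P.det := by
    apply IsUnit.of_mul_eq_one (snf.bM.toMatrix ⇑std).det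
    rw [← Matrix.det_mul, Module.Basis.toMatrix_mul_toMatrix_flip, Matrix.det_one]
  have hCu : IsUnit C.det := by
    apply IsUnit.of_mul_eq_one (bR.toMatrix ⇑bN').det
    rw [← Matrix.det_mul, Module.Basis.toMatrix_mul_toMatrix_flip, Matrix.det_one]
  have hunit : ∀ u : ℤ, IsUnit u → u.natAbs = 1 := by
    intro u hu
    rcases Int.isUnit_iff.mp hu with h | h <;> simp [h]
  have hdetM : M.det.natAbs = S.det.natAbs * C.det.natAbs := by
    rw [← Int.natAbs_mul, ← Matrix.det_mul, hSC, hR, Matrix.det_transpose]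
  rw [hdetM, hunit _ hCu, mul_one, hS, Matrix.det_mul, Matrix.det_diagonal,
    Int.natAbs_mul, hunit _ hPu, one_mul]
  rw [show (∏ i : ι, snf.a (eF.symm i)).natAbs = ∏ i : ι, (snf.a (eF.symm i)).natAbs from
    map_prod Int.natAbsHom _ _]
  exact (Equiv.prod_comp eF.symm fun k => (snf.a k).natAbs).symm

/-- The solution subgroup of a ℤ-exponent-matrix system. -/
def solGroupZ (M : Matrix ι ι ℤ) : Subgroup (ι → ℂˣ) where
  carrier := {l | ∀ i, ∏ j, l j ^ M i j = 1}
  one_mem' := by intro i; simp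
  mul_mem' := by
    intro a b ha hb i
    simp only [Pi.mul_apply, mul_zpow, Finset.prod_mul_distrib, ha i, hb i, mul_one]
  inv_mem' := by
    intro a ha i
    have : ∀ j, (a⁻¹ : ι → ℂˣ) j ^ M i j = ((a j) ^ M i j)⁻¹ := fun j => _root_.inv_zpow _ _
    rw [Finset.prod_congr rfl fun j _ => this j, Finset.prod_inv_distrib, ha i, inv_one]

lemma mem_solGroupZ {M : Matrix ι ι ℤ} {l : ι → ℂˣ} :
    l ∈ solGroupZ M ↔ ∀ i, ∏ j, l j ^ M i j = 1 := Iff.rfl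

noncomputable def charToSol (M : Matrix ι ι ℤ)
    (χ : Multiplicative ((ι → ℤ) ⧸ Submodule.span ℤ (Set.range M)) →* ℂˣ) : ι → ℂˣ :=
  fun j => χ (Multiplicative.ofAdd (Submodule.Quotient.mk (Pi.single j 1)))

lemma charToSol_prod (M : Matrix ι ι ℤ)
    (χ : Multiplicative ((ι → ℤ) ⧸ Submodule.span ℤ (Set.range M)) →* ℂˣ) (v : ι → ℤ) :
    ∏ j, charToSol M χ j ^ v j = χ (Multiplicative.ofAdd (Submodule.Quotient.mk v)) := by
  have h1 : ∀ j, charToSol M χ j ^ v j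
      = χ (Multiplicative.ofAdd (Submodule.Quotient.mk (Pi.single j (v j)))) := by
    intro j
    rw [charToSol, ← map_zpow]
    congr 1
    rw [← ofAdd_zsmul]
    congr 1
    rw [← Submodule.Quotient.mk_smul]
    congr 1
    rw [← Pi.single_smul, smul_eq_mul, mul_one]
  rw [Finset.prod_congr rfl fun j _ => h1 j, ← map_prod]
  congr 1
  rw [← ofAdd_sum]
  congr 1
  have : ∀ j, (Submodule.Quotient.mk (Pi.single j (v j)) :
      (ι → ℤ) ⧸ Submodule.span ℤ (Set.range M)) =
      (Submodule.span ℤ (Set.range M)).mkQ (Pi.single j (v j)) := fun _ => rfl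
  rw [Finset.sum_congr rfl fun j _ => this j, ← map_sum, Finset.univ_sum_single]
  rfl

lemma card_solGroupZ (M : Matrix ι ι ℤ) (hM : M.det ≠ 0) :
    Nat.card (solGroupZ M) = M.det.natAbs := by
  classical
  set L := Submodule.span ℤ (Set.range M) with hLdef
  have hmem : ∀ χ : Multiplicative ((ι → ℤ) ⧸ L) →* ℂˣ, charToSol M χ ∈ solGroupZ M := by
    intro χ i
    rw [charToSol_prod]
    have h0 : (Submodule.Quotient.mk (M i) : (ι → ℤ) ⧸ L) = 0 :=
      (Submodule.Quotient.mk_eq_zero _).mpr (Submodule.subset_span (Set.mem_range_self i))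
    rw [h0]
    simpa using map_one χ
  let Φ : (Multiplicative ((ι → ℤ) ⧸ L) →* ℂˣ) → solGroupZ M := fun χ => ⟨charToSol M χ, hmem χ⟩
  have hinj : Function.Injective Φ := by
    intro χ₁ χ₂ h
    have hfun : charToSol M χ₁ = charToSol M χ₂ := congrArg Subtype.val h
    ext x
    obtain ⟨v, hv⟩ := Submodule.Quotient.mk_surjective L (Multiplicative.toAdd x)
    have e1 := charToSol_prod M χ₁ v
    have e2 := charToSol_prod M χ₂ v
    rw [hfun] at e1
    have h3 : χ₁ (Multiplicative.ofAdd (Submodule.Quotient.mk v))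
        = χ₂ (Multiplicative.ofAdd (Submodule.Quotient.mk v)) := by rw [← e1, ← e2]
    exact congrArg Units.val (by rw [hv] at h3; exact h3)
  have hsurj : Function.Surjective Φ := by
    rintro ⟨l, hl⟩
    let ψ : (ι → ℤ) →ₗ[ℤ] Additive ℂˣ :=
    { toFun := fun v => Additive.ofMul (∏ j, l j ^ v j)
      map_add' := by
        intro u v
        simp only [Pi.add_apply]
        rw [← ofMul_mul]
        congr 1
        rw [← Finset.prod_mul_distrib]
        exact Finset.prod_congr rfl fun j _ => zpow_add (l j) (u j) (v j)
      map_smul' := by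
        intro c v
        simp only [Pi.smul_apply, smul_eq_mul, RingHom.id_apply]
        rw [← ofMul_zpow]
        congr 1
        rw [← Finset.prod_zpow]
        exact Finset.prod_congr rfl fun j _ => by
          rw [mul_comm c (v j), _root_.zpow_mul] }
    have hker : L ≤ LinearMap.ker ψ := by
      rw [hLdef, Submodule.span_le]
      rintro _ ⟨i, rfl⟩
      have : ψ (M i) = Additive.ofMul (1 : ℂˣ) := by
        show Additive.ofMul (∏ j, l j ^ M i j) = _
        rw [hl i]
      simpa [LinearMap.mem_ker] using this
    let χ := AddMonoidHom.toMultiplicativeLeft (L.liftQ ψ hker).toAddMonoidHom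
    refine ⟨χ, ?_⟩
    apply Subtype.ext
    funext j
    show χ (Multiplicative.ofAdd (Submodule.Quotient.mk (Pi.single j 1))) = l j
    have : χ (Multiplicative.ofAdd (Submodule.Quotient.mk (Pi.single j 1)))
        = Additive.toMul (ψ (Pi.single j (1:ℤ))) := by
      show Additive.toMul ((L.liftQ ψ hker) (Submodule.Quotient.mk (Pi.single j 1))) = _
      rw [Submodule.liftQ_apply]
    rw [this]
    show (∏ k, l k ^ ((Pi.single j (1:ℤ) : ι → ℤ) k)) = l j
    rw [Finset.prod_eq_single j]
    · simp
    · intro k _ hk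
      rw [Pi.single_eq_of_ne hk, zpow_zero]
    · intro h; exact absurd (Finset.mem_univ j) h
  have hQcard : Nat.card ((ι → ℤ) ⧸ L) = M.det.natAbs := card_quot_rowSpan M hM
  have hQfin : Finite ((ι → ℤ) ⧸ L) := by
    have hne : Nat.card ((ι → ℤ) ⧸ L) ≠ 0 := by
      rw [hQcard]; exact Int.natAbs_ne_zero.mpr hM
    exact (Nat.card_ne_zero.mp hne).2
  have hMfin : Finite (Multiplicative ((ι → ℤ) ⧸ L)) := hQfin
  have hexp : NeZero ((Monoid.exponent (Multiplicative ((ι → ℤ) ⧸ L)) : ℂ)) :=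
    ⟨Nat.cast_ne_zero.mpr Monoid.exponent_ne_zero_of_finite⟩
  obtain ⟨e⟩ := CommGroup.monoidHom_mulEquiv_of_hasEnoughRootsOfUnity
    (Multiplicative ((ι → ℤ) ⧸ L)) ℂ
  rw [← Nat.card_congr (Equiv.ofBijective Φ ⟨hinj, hsurj⟩), Nat.card_congr e.toEquiv, ← hQcard]
  exact Nat.card_congr ⟨Multiplicative.toAdd, Multiplicative.ofAdd, fun _ => rfl, fun _ => rfl⟩

end AuxCounting

lemma mem_isotropy {E : Matrix (Fin n) (Fin n) ℕ} {I : Finset (Fin n)} {l : Fin n → ℂˣ} :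
    l ∈ isotropy E I ↔ (∀ i, ∏ j, l j ^ E i j = 1) ∧ ∀ j ∈ I, l j = 1 := by
  rw [isotropy, Subgroup.mem_inf]; rfl

/-- Restricting the full product over `Fin n` to `Iᶜ` for an element vanishing on `I`. -/
lemma prod_restrict {E : Matrix (Fin n) (Fin n) ℕ} {I : Finset (Fin n)} {l : Fin n → ℂˣ}
    (hfix : ∀ j ∈ I, l j = 1) (i : Fin n) :
    ∏ c : {j : Fin n // j ∉ I}, l (c : Fin n) ^ E i (c : Fin n) = ∏ j, l j ^ E i j := by
  rw [← Finset.prod_subtype Iᶜ (fun x => Finset.mem_compl) (fun j => l j ^ E i j)]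
  apply Finset.prod_subset (Finset.subset_univ _)
  intro j _ hj
  rw [Finset.mem_compl, not_not] at hj
  rw [hfix j hj, one_pow]

lemma card_isotropy_eq_card_solGroupZ (E : Matrix (Fin n) (Fin n) ℕ) (I : Finset (Fin n))
    (e : {j : Fin n // j ∉ I} ≃ {i : Fin n // i ∉ rowSet E I}) :
    Nat.card (isotropy E I)
      = Nat.card (solGroupZ (fun r c : {j : Fin n // j ∉ I} =>
          (E ((e r : Fin n)) ((c : Fin n)) : ℤ))) := by
  classical
  set M : Matrix {j : Fin n // j ∉ I} {j : Fin n // j ∉ I} ℤ :=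
    fun r c => (E ((e r : Fin n)) ((c : Fin n)) : ℤ) with hM
  apply Nat.card_congr
  refine Equiv.ofBijective (fun l => ⟨fun c => (l : Fin n → ℂˣ) (c : Fin n), ?_⟩) ⟨?_, ?_⟩
  · -- membership
    obtain ⟨hsym, hfix⟩ := mem_isotropy.mp l.2
    intro r
    have : ∀ c : {j : Fin n // j ∉ I},
        (l : Fin n → ℂˣ) (c : Fin n) ^ M r c
          = (l : Fin n → ℂˣ) (c : Fin n) ^ E ((e r : Fin n)) (c : Fin n) := by
      intro c; rw [hM]; exact zpow_natCast _ _
    rw [Finset.prod_congr rfl fun c _ => this c, prod_restrict hfix]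
    exact hsym _
  · -- injective
    intro l₁ l₂ h
    have h' : ∀ c : {j : Fin n // j ∉ I}, (l₁ : Fin n → ℂˣ) (c : Fin n)
        = (l₂ : Fin n → ℂˣ) (c : Fin n) := fun c => congrFun (congrArg Subtype.val h) c
    apply Subtype.ext; funext j
    by_cases hj : j ∈ I
    · rw [(mem_isotropy.mp l₁.2).2 j hj, (mem_isotropy.mp l₂.2).2 j hj]
    · exact h' ⟨j, hj⟩
  · -- surjective
    rintro ⟨l', hl'⟩
    set l : Fin n → ℂˣ := fun j => if h : j ∉ I then l' ⟨j, h⟩ else 1 with hl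
    have hfix : ∀ j ∈ I, l j = 1 := by
      intro j hj; rw [hl]; simp [hj]
    have hmem : l ∈ isotropy E I := by
      rw [mem_isotropy]
      refine ⟨?_, hfix⟩
      intro i
      rw [← prod_restrict hfix i]
      by_cases hi : i ∈ rowSet E I
      · apply Finset.prod_eq_one
        intro c _
        have : E i (c : Fin n) = 0 := by
          have := Finset.mem_filter.mp hi
          exact this.2 _ c.2
        rw [this, pow_zero]
      · have hr := hl' (e.symm ⟨i, hi⟩)
        have hei : ((e (e.symm ⟨i, hi⟩) : Fin n)) = i := by
          rw [e.apply_symm_apply]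
        rw [hM] at hr
        simp only [hei] at hr
        rw [← hr]
        apply Finset.prod_congr rfl
        intro c _
        rw [← zpow_natCast]
        congr 1
        rw [hl]
        simp [c.2]
    refine ⟨⟨l, hmem⟩, ?_⟩
    apply Subtype.ext; funext c
    show l (c : Fin n) = l' c
    rw [hl]
    simp [c.2]

open Matrix in
lemma det_natAbs_factor (E : Matrix (Fin n) (Fin n) ℕ) (I : Finset (Fin n))
    (eq1 : {i : Fin n // i ∈ rowSet E I} ≃ {j : Fin n // j ∈ I})
    (e2 : {j : Fin n // j ∉ I} ≃ {i : Fin n // i ∉ rowSet E I}) :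
    (E.map (Nat.cast : ℕ → ℤ)).det.natAbs
      = (Matrix.det (fun r c : {j : Fin n // j ∈ I} =>
            (E ((eq1.symm r : Fin n)) ((c : Fin n)) : ℤ))).natAbs
        * (Matrix.det (fun r c : {j : Fin n // j ∉ I} =>
            (E ((e2 r : Fin n)) ((c : Fin n)) : ℤ))).natAbs := by
  classical
  set N := E.map (Nat.cast : ℕ → ℤ) with hN
  set B11 : Matrix {j : Fin n // j ∈ I} {j : Fin n // j ∈ I} ℤ :=
    fun r c => (E ((eq1.symm r : Fin n)) ((c : Fin n)) : ℤ) with hB11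
  set B22 : Matrix {j : Fin n // j ∉ I} {j : Fin n // j ∉ I} ℤ :=
    fun r c => (E ((e2 r : Fin n)) ((c : Fin n)) : ℤ) with hB22
  set B21 : Matrix {j : Fin n // j ∉ I} {j : Fin n // j ∈ I} ℤ :=
    fun r c => (E ((e2 r : Fin n)) ((c : Fin n)) : ℤ) with hB21
  set ec : ({j : Fin n // j ∈ I} ⊕ {j : Fin n // j ∉ I}) ≃ Fin n :=
    Equiv.sumCompl (· ∈ I) with hec
  set er : ({j : Fin n // j ∈ I} ⊕ {j : Fin n // j ∉ I}) ≃ Fin n :=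
    (Equiv.sumCongr eq1.symm e2).trans (Equiv.sumCompl (· ∈ rowSet E I)) with her
  have hblock : N.submatrix ⇑er ⇑ec = Matrix.fromBlocks B11 0 B21 B22 := by
    ext i j
    cases i with
    | inl r =>
      cases j with
      | inl c => simp [her, hec, hN, Matrix.submatrix_apply, Matrix.fromBlocks, hB11]
      | inr c =>
        have h0 : E ((eq1.symm r : Fin n)) ((c : Fin n)) = 0 := by
          have := (Finset.mem_filter.mp (eq1.symm r).2).2
          exact this _ c.2
        simp [her, hec, hN, Matrix.submatrix_apply, Matrix.fromBlocks, h0]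
    | inr r =>
      cases j with
      | inl c => simp [her, hec, hN, Matrix.submatrix_apply, Matrix.fromBlocks, hB21]
      | inr c => simp [her, hec, hN, Matrix.submatrix_apply, Matrix.fromBlocks, hB22]
  have hdet1 : (N.submatrix ⇑er ⇑ec).det = B11.det * B22.det := by
    rw [hblock, Matrix.det_fromBlocks_zero₁₂]
  have hperm : N.submatrix ⇑er ⇑ec = (N.submatrix ⇑ec ⇑ec).submatrix ⇑(er.trans ec.symm) id := by
    rw [Matrix.submatrix_submatrix]
    congr 1
    ext x
    simp
  have hdet2 : (N.submatrix ⇑er ⇑ec).det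
      = ((Equiv.Perm.sign (er.trans ec.symm) : ℤˣ) : ℤ) * N.det := by
    rw [hperm, Matrix.det_permute, Matrix.det_submatrix_equiv_self]
    norm_cast
  have : N.det.natAbs = (N.submatrix ⇑er ⇑ec).det.natAbs := by
    rw [hdet2, Int.natAbs_mul, Int.units_natAbs, one_mul]
  rw [this, hdet1, Int.natAbs_mul]

noncomputable def goodEq1 {E : Matrix (Fin n) (Fin n) ℕ} {I : Finset (Fin n)}
    (h : (rowSet E I).card = I.card) : {i : Fin n // i ∈ rowSet E I} ≃ {j : Fin n // j ∈ I} :=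
  Fintype.equivOfCardEq (by
    rw [Fintype.card_coe, Fintype.card_coe, h])

noncomputable def goodE2 {E : Matrix (Fin n) (Fin n) ℕ} {I : Finset (Fin n)}
    (h : (rowSet E I).card = I.card) :
    {j : Fin n // j ∉ I} ≃ {i : Fin n // i ∉ rowSet E I} :=
  Fintype.equivOfCardEq (by
    rw [Fintype.card_subtype_compl, Fintype.card_subtype_compl]
    have h1 : Fintype.card {j : Fin n // j ∈ I} = I.card := Fintype.card_coe _
    have h2 : Fintype.card {i : Fin n // i ∈ rowSet E I} = (rowSet E I).card :=
      Fintype.card_coe _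
    rw [h1, h2, h])

open Matrix in
lemma rowSet_transpose_compl (E : Matrix (Fin n) (Fin n) ℕ)
    (hdet : (E.map (Nat.cast : ℕ → ℤ)).det ≠ 0) (I : Finset (Fin n))
    (hgood : (rowSet E I).card = I.card) :
    rowSet Eᵀ (rowSet E I)ᶜ = Iᶜ := by
  classical
  ext k
  simp only [rowSet, Finset.mem_filter, Finset.mem_univ, true_and, Finset.mem_compl,
    Matrix.transpose_apply]
  constructor
  · intro hk
    intro hkI
    -- column k of B11 is zero, contradiction
    set eq1 := goodEq1 hgood
    set e2 := goodE2 hgood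
    have hfac := det_natAbs_factor E I eq1 e2
    have hcol : (Matrix.det (fun r c : {j : Fin n // j ∈ I} =>
        (E ((eq1.symm r : Fin n)) ((c : Fin n)) : ℤ))) = 0 := by
      apply Matrix.det_eq_zero_of_column_eq_zero ⟨k, hkI⟩
      intro r
      have h0 : E ((eq1.symm r : Fin n)) k = 0 :=
        hk _ (not_not_intro ((Finset.mem_filter.mp (eq1.symm r).2).2))
      simp [h0]
    rw [hcol] at hfac
    simp at hfac
    exact hdet hfac
  · intro hk i hi
    exact (not_not.mp hi) k hk

open Matrix in
/-- the key identity: for a good `I`, the isotropy cardinalities multiply to `|det E|`,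
and the transposed one is nonzero. -/
lemma key_identity (E : Matrix (Fin n) (Fin n) ℕ)
    (hdet : (E.map (Nat.cast : ℕ → ℤ)).det ≠ 0) (I : Finset (Fin n))
    (hgood : (rowSet E I).card = I.card) :
    Nat.card (isotropy E I) * Nat.card (isotropy Eᵀ (rowSet E I)ᶜ)
        = (E.map (Nat.cast : ℕ → ℤ)).det.natAbs
      ∧ Nat.card (isotropy E I) ≠ 0
      ∧ Nat.card (isotropy Eᵀ (rowSet E I)ᶜ) ≠ 0 := by
  classical
  set eq1 := goodEq1 hgood with heq1
  set e2 := goodE2 hgood with he2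
  set B11 : Matrix {j : Fin n // j ∈ I} {j : Fin n // j ∈ I} ℤ :=
    fun r c => (E ((eq1.symm r : Fin n)) ((c : Fin n)) : ℤ) with hB11
  set B22 : Matrix {j : Fin n // j ∉ I} {j : Fin n // j ∉ I} ℤ :=
    fun r c => (E ((e2 r : Fin n)) ((c : Fin n)) : ℤ) with hB22
  have hfac := det_natAbs_factor E I eq1 e2
  have hne : (E.map (Nat.cast : ℕ → ℤ)).det.natAbs ≠ 0 := Int.natAbs_ne_zero.mpr hdet
  have h11 : B11.det ≠ 0 := by
    intro h; rw [← hB11] at hfac; rw [h] at hfac; simp at hfac; exact hdet hfac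
  have h22 : B22.det ≠ 0 := by
    intro h; rw [← hB22] at hfac; rw [h] at hfac; simp at hfac; exact hdet hfac
  have c2 : Nat.card (isotropy E I) = B22.det.natAbs := by
    rw [card_isotropy_eq_card_solGroupZ E I e2, card_solGroupZ _ h22]
  -- transpose side
  have hrow : rowSet Eᵀ (rowSet E I)ᶜ = Iᶜ := rowSet_transpose_compl E hdet I hgood
  let step1 : {j : Fin n // j ∉ (rowSet E I)ᶜ} ≃ {j : Fin n // j ∈ rowSet E I} :=
    Equiv.subtypeEquivRight (fun x => by simp)
  let step3 : {i : Fin n // i ∈ I} ≃ {i : Fin n // i ∉ rowSet Eᵀ (rowSet E I)ᶜ} :=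
    Equiv.subtypeEquivRight (fun x => by rw [hrow]; simp)
  let e' : {j : Fin n // j ∉ (rowSet E I)ᶜ} ≃ {i : Fin n // i ∉ rowSet Eᵀ (rowSet E I)ᶜ} :=
    step1.trans (eq1.trans step3)
  set MJ : Matrix {j : Fin n // j ∉ (rowSet E I)ᶜ} {j : Fin n // j ∉ (rowSet E I)ᶜ} ℤ :=
    fun r c => (Eᵀ ((e' r : Fin n)) ((c : Fin n)) : ℤ) with hMJ
  let u : {j : Fin n // j ∉ (rowSet E I)ᶜ} ≃ {j : Fin n // j ∈ I} := step1.trans eq1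
  have hcoe1 : ∀ x : {j : Fin n // j ∉ (rowSet E I)ᶜ}, ((step1 x : Fin n)) = (x : Fin n) := by
    intro x; simp [step1, Equiv.subtypeEquivRight, Equiv.subtypeEquiv_apply]; rfl
  have hcoe3 : ∀ x : {i : Fin n // i ∈ I}, ((step3 x : Fin n)) = (x : Fin n) := by
    intro x; simp [step3, Equiv.subtypeEquivRight, Equiv.subtypeEquiv_apply]; rfl
  have hMJeq : MJ = (B11.submatrix ⇑u ⇑u)ᵀ := by
    ext r c
    simp only [hMJ, Matrix.transpose_apply, Matrix.submatrix_apply, hB11]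
    show ((E ((c : Fin n)) ((e' r) : Fin n) : ℤ))
        = (E ((eq1.symm (u c) : Fin n)) ((u r : Fin n)) : ℤ)
    have h1 : ((e' r : Fin n)) = ((u r : Fin n)) := by
      show ((step3 (eq1 (step1 r)) : Fin n)) = _
      rw [hcoe3]; rfl
    have h2 : ((eq1.symm (u c) : Fin n)) = (c : Fin n) := by
      have hu : eq1.symm (u c) = step1 c := by
        show eq1.symm (eq1 (step1 c)) = step1 c
        exact eq1.symm_apply_apply _
      rw [hu, hcoe1]
    rw [h1, h2]
  have hdetMJ : MJ.det = B11.det := by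
    rw [hMJeq, Matrix.det_transpose, Matrix.det_submatrix_equiv_self]
  have c1 : Nat.card (isotropy Eᵀ (rowSet E I)ᶜ) = B11.det.natAbs := by
    rw [card_isotropy_eq_card_solGroupZ Eᵀ (rowSet E I)ᶜ e']
    exact (card_solGroupZ MJ (by rw [hdetMJ]; exact h11)).trans (by rw [hdetMJ])
  refine ⟨?_, ?_, ?_⟩
  · rw [c1, c2, hfac, ← hB11, ← hB22, mul_comm]
  · rw [c2]; exact Int.natAbs_ne_zero.mpr h22
  · rw [c1]; exact Int.natAbs_ne_zero.mpr h11

lemma neg_one_pow_helper (a b N : ℕ) (h : a + b + 2 = N) :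
    (-1 : ℚ) ^ N = (-1 : ℚ) ^ a * (-1 : ℚ) ^ b := by
  subst h; rw [pow_add, pow_add]; norm_num

lemma neg_one_pow_succ_helper (N : ℕ) (h : 0 < N) :
    (-1 : ℚ) ^ N = -(-1 : ℚ) ^ (N - 1) := by
  obtain ⟨m, rfl⟩ : ∃ m, N = m + 1 := ⟨N - 1, by omega⟩
  rw [pow_succ]
  simp

open Matrix in
/-- The combinatorial form of the main duality theorem in the extreme case `G = G_f`,
`G̃ = {1}`: with `d = |det E|`, one has
`∑_{J good for E^T, 0<|J|<n} (−1)^{|J|−1} d / |G_{E^T}^J| + (−1)^{n−1} d − 1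
 = (−1)^n (∑_{I good for E, 0<|I|<n} (−1)^{|I|−1} |G_E^I| + (−1)^{n−1} − d)`. -/
theorem euler_duality_extreme (E : Matrix (Fin n) (Fin n) ℕ)
    (hdet : (E.map (Nat.cast : ℕ → ℤ)).det ≠ 0) :
    (∑ J ∈ Finset.univ.filter
        (fun J : Finset (Fin n) => (rowSet Eᵀ J).card = J.card ∧ 0 < J.card ∧ J.card < n),
      (-1 : ℚ) ^ (J.card - 1) * ((E.map (Nat.cast : ℕ → ℤ)).det.natAbs : ℚ) /
        (Nat.card (isotropy Eᵀ J) : ℚ))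
      + (-1 : ℚ) ^ (n - 1) * ((E.map (Nat.cast : ℕ → ℤ)).det.natAbs : ℚ) - 1
    = (-1 : ℚ) ^ n *
      ((∑ I ∈ Finset.univ.filter
          (fun I : Finset (Fin n) => (rowSet E I).card = I.card ∧ 0 < I.card ∧ I.card < n),
        (-1 : ℚ) ^ (I.card - 1) * (Nat.card (isotropy E I) : ℚ))
        + (-1 : ℚ) ^ (n - 1) - ((E.map (Nat.cast : ℕ → ℤ)).det.natAbs : ℚ)) := by
  classical
  rcases Nat.eq_zero_or_pos n with hn | hn
  · subst hn
    have hd : (E.map (Nat.cast : ℕ → ℤ)).det = 1 := Matrix.det_isEmpty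
    have hfilt : ∀ (F : Matrix (Fin 0) (Fin 0) ℕ),
        (Finset.univ.filter
          (fun J : Finset (Fin 0) => (rowSet F J).card = J.card ∧ 0 < J.card ∧ J.card < 0))
          = ∅ := by
      intro F
      apply Finset.filter_false_of_mem
      intro J _
      rintro ⟨-, -, h⟩
      omega
    rw [hfilt, hfilt]
    simp [hd]
  -- main case
  have hdetT : ((Eᵀ).map (Nat.cast : ℕ → ℤ)).det ≠ 0 := by
    rw [Matrix.transpose_map, Matrix.det_transpose]
    exact hdet
  set d : ℚ := ((E.map (Nat.cast : ℕ → ℤ)).det.natAbs : ℚ) with hd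
  have hdT : (((Eᵀ).map (Nat.cast : ℕ → ℤ)).det.natAbs : ℚ) = d := by
    rw [Matrix.transpose_map, Matrix.det_transpose]
  have hdnat : ((Eᵀ).map (Nat.cast : ℕ → ℤ)).det.natAbs
      = (E.map (Nat.cast : ℕ → ℤ)).det.natAbs := by
    rw [Matrix.transpose_map, Matrix.det_transpose]
  have hsum : (∑ J ∈ Finset.univ.filter
        (fun J : Finset (Fin n) => (rowSet Eᵀ J).card = J.card ∧ 0 < J.card ∧ J.card < n),
      (-1 : ℚ) ^ (J.card - 1) * d / (Nat.card (isotropy Eᵀ J) : ℚ))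
      = ∑ I ∈ Finset.univ.filter
          (fun I : Finset (Fin n) => (rowSet E I).card = I.card ∧ 0 < I.card ∧ I.card < n),
        (-1 : ℚ) ^ (n - I.card - 1) * (Nat.card (isotropy E I) : ℚ) := by
    refine Finset.sum_nbij' (fun J => (rowSet Eᵀ J)ᶜ) (fun I => (rowSet E I)ᶜ) ?_ ?_ ?_ ?_ ?_
    · -- maps into filterE
      intro J hJ
      rw [Finset.mem_filter] at hJ ⊢
      obtain ⟨-, hgood, h0, hlt⟩ := hJ
      have hrow : rowSet E (rowSet Eᵀ J)ᶜ = Jᶜ := by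
        have h := rowSet_transpose_compl Eᵀ hdetT J hgood
        rwa [Matrix.transpose_transpose] at h
      refine ⟨Finset.mem_univ _, ?_, ?_, ?_⟩
      · rw [hrow, Finset.card_compl, Finset.card_compl, hgood]
      · rw [Finset.card_compl, Fintype.card_fin]; omega
      · have : (rowSet Eᵀ J).card = J.card := hgood
        rw [Finset.card_compl, Fintype.card_fin, this]; omega
    · -- maps into filterT
      intro I hI
      rw [Finset.mem_filter] at hI ⊢
      obtain ⟨-, hgood, h0, hlt⟩ := hI
      have hrow : rowSet Eᵀ (rowSet E I)ᶜ = Iᶜ := rowSet_transpose_compl E hdet I hgood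
      refine ⟨Finset.mem_univ _, ?_, ?_, ?_⟩
      · rw [hrow, Finset.card_compl, Finset.card_compl, hgood]
      · rw [Finset.card_compl, Fintype.card_fin, hgood]; omega
      · rw [Finset.card_compl, Fintype.card_fin, hgood]; omega
    · -- left inverse
      intro J hJ
      rw [Finset.mem_filter] at hJ
      have hrow : rowSet E (rowSet Eᵀ J)ᶜ = Jᶜ := by
        have h := rowSet_transpose_compl Eᵀ hdetT J hJ.2.1
        rwa [Matrix.transpose_transpose] at h
      show (rowSet E (rowSet Eᵀ J)ᶜ)ᶜ = J
      rw [hrow, compl_compl]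
    · -- right inverse
      intro I hI
      rw [Finset.mem_filter] at hI
      show (rowSet Eᵀ (rowSet E I)ᶜ)ᶜ = I
      rw [rowSet_transpose_compl E hdet I hI.2.1, compl_compl]
    · -- term equality
      intro J hJ
      rw [Finset.mem_filter] at hJ
      obtain ⟨-, hgood, h0, hlt⟩ := hJ
      obtain ⟨hprod, hJne, hIne⟩ := key_identity Eᵀ hdetT J hgood
      rw [Matrix.transpose_transpose] at hprod hIne
      rw [hdnat] at hprod
      have hrow : rowSet E (rowSet Eᵀ J)ᶜ = Jᶜ := by
        have h := rowSet_transpose_compl Eᵀ hdetT J hgood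
        rwa [Matrix.transpose_transpose] at h
      have hcardI : ((rowSet Eᵀ J)ᶜ).card = n - J.card := by
        rw [Finset.card_compl, Fintype.card_fin, hgood]
      have hexp : n - ((rowSet Eᵀ J)ᶜ).card - 1 = J.card - 1 := by
        rw [hcardI]; omega
      rw [hexp]
      -- now d / cJ = cI
      have hq : d = (Nat.card (isotropy Eᵀ J) : ℚ)
          * (Nat.card (isotropy E (rowSet Eᵀ J)ᶜ) : ℚ) := by
        rw [hd, ← hprod]; push_cast; ring
      rw [hq]
      have hne : (Nat.card (isotropy Eᵀ J) : ℚ) ≠ 0 := Nat.cast_ne_zero.mpr hJne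
      field_simp
  rw [hsum]
  -- pointwise sign manipulation
  have hsign : ∀ I ∈ Finset.univ.filter
      (fun I : Finset (Fin n) => (rowSet E I).card = I.card ∧ 0 < I.card ∧ I.card < n),
      (-1 : ℚ) ^ (n - I.card - 1) * (Nat.card (isotropy E I) : ℚ)
        = (-1 : ℚ) ^ n * ((-1 : ℚ) ^ (I.card - 1) * (Nat.card (isotropy E I) : ℚ)) := by
    intro I hI
    rw [Finset.mem_filter] at hI
    obtain ⟨-, -, h0, hlt⟩ := hI
    have hexp : (n - I.card - 1) + (I.card - 1) + 2 = n := by omega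
    have hpow : (-1 : ℚ) ^ n = (-1 : ℚ) ^ (n - I.card - 1) * (-1 : ℚ) ^ (I.card - 1) :=
      neg_one_pow_helper _ _ _ hexp
    rw [hpow]
    have h2 : (-1 : ℚ) ^ (I.card - 1) * (-1 : ℚ) ^ (I.card - 1) = 1 := by
      rw [← pow_add]
      exact Even.neg_one_pow ⟨I.card - 1, rfl⟩
    calc (-1 : ℚ) ^ (n - I.card - 1) * (Nat.card (isotropy E I) : ℚ)
        = (-1 : ℚ) ^ (n - I.card - 1)
          * ((-1 : ℚ) ^ (I.card - 1) * (-1 : ℚ) ^ (I.card - 1))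
          * (Nat.card (isotropy E I) : ℚ) := by rw [h2, mul_one]
      _ = _ := by ring
  rw [Finset.sum_congr rfl hsign, ← Finset.mul_sum]
  -- final algebra
  set S : ℚ := ∑ I ∈ Finset.univ.filter
      (fun I : Finset (Fin n) => (rowSet E I).card = I.card ∧ 0 < I.card ∧ I.card < n),
    (-1 : ℚ) ^ (I.card - 1) * (Nat.card (isotropy E I) : ℚ) with hS
  have hn1 : (-1 : ℚ) ^ n = -(-1 : ℚ) ^ (n - 1) := neg_one_pow_succ_helper n hn
  have ht2 : (-1 : ℚ) ^ (n - 1) * (-1 : ℚ) ^ (n - 1) = 1 := by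
    rw [← pow_add]
    exact Even.neg_one_pow ⟨n - 1, rfl⟩
  rw [hn1]
  linear_combination ht2
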